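/- For every monotone inflationary function h : ℕ → ℕ and every ordinal α ≤ ω^ω, the Hardy function h^α : ℕ → ℕ is monotone and inflationary (i.e., x ≤ h^α(x) for all x, and h^α(x) ≤ h^α(y) whenever x ≤ y). -/

import Mathlib

open Ordinal

/-- The graph of the Hardy hierarchy `h^α` for ordinals `α ≤ ω^ω`, defined with
the standard fundamental sequences `(ω^ω)(x) = ω^(x+1)` and
`(β + ω^(k+1))(x) = β + ω^k·(x+1)` (for `β + ω^(k+1)` in Cantor Normal Form,
i.e. `ω^(k+1) ∣ β`).  `HardyRel h α x y` means `h^α(x) = y`. -/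
inductive HardyRel (h : ℕ → ℕ) : Ordinal → ℕ → ℕ → Prop
  | zero (x : ℕ) : HardyRel h 0 x x
  | succ (α : Ordinal) (x y : ℕ) : HardyRel h α (h x) y → HardyRel h (α + 1) x y
  | top (x y : ℕ) : HardyRel h (omega0 ^ (x + 1 : ℕ)) x y →
      HardyRel h (omega0 ^ omega0) x y
  | limit (β : Ordinal) (k x y : ℕ) : omega0 ^ (k + 1) ∣ β →
      HardyRel h (β + omega0 ^ k * ((x + 1 : ℕ) : Ordinal)) x y →
      HardyRel h (β + omega0 ^ (k + 1)) x y


universe u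

def val : List ℕ → Ordinal.{u}
  | [] => 0
  | e :: L => val L + omega0 ^ e

@[simp] lemma val_nil : val [] = 0 := rfl
@[simp] lemma val_cons (e L) : val (e :: L) = val L + omega0 ^ e := rfl

lemma val_append (A B : List ℕ) : val (A ++ B) = val B + val A := by
  induction A with
  | nil => simp
  | cons e A ih => simp [ih, add_assoc]

lemma val_replicate (n k : ℕ) : val (List.replicate n k) = omega0 ^ k * (n : Ordinal) := by
  induction n with
  | zero => simp
  | succ n ih =>
    rw [List.replicate_succ, val_cons, ih]
    push_cast
    rw [mul_add, mul_one]

lemma omegaPow_mul_lt (k x : ℕ) : omega0 ^ k * ((x+1:ℕ) : Ordinal) < omega0 ^ (k+1) := by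
  rw [pow_succ]
  have hpos : (0:Ordinal) < omega0 ^ k := pos_iff_ne_zero.2 (pow_ne_zero _ omega0_ne_zero)
  exact (mul_lt_mul_iff_right₀ hpos).2 (nat_lt_omega0 _)

def H (h : ℕ → ℕ) : List ℕ → ℕ → ℕ
  | [], x => x
  | 0 :: L, x => H h L (h x)
  | (k+1) :: L, x => H h (List.replicate (x+1) k ++ L) x
termination_by L _ => val.{0} L
decreasing_by
  · rw [val_cons, pow_zero]
    exact lt_add_of_pos_right _ zero_lt_one
  · rw [val_append, val_replicate, val_cons]
    exact (add_lt_add_iff_left _).2 (omegaPow_mul_lt k x)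

@[simp] lemma H_nil (h x) : H h [] x = x := by simp [H]
@[simp] lemma H_zero (h L x) : H h (0 :: L) x = H h L (h x) := by simp [H]
lemma H_succ (h k L x) : H h ((k+1) :: L) x = H h (List.replicate (x+1) k ++ L) x := by
  rw [H]

lemma H_append (h : ℕ → ℕ) (A B : List ℕ) (x : ℕ) :
    H h (A ++ B) x = H h B (H h A x) := by
  match A with
  | [] => simp
  | 0 :: A => rw [List.cons_append, H_zero, H_zero, H_append h A B (h x)]
  | (k+1) :: A =>
    rw [List.cons_append, H_succ, H_succ, ← List.append_assoc,
      H_append h (List.replicate (x+1) k ++ A) B x]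
termination_by val.{0} A
decreasing_by
  · rw [val_cons, pow_zero]
    exact lt_add_of_pos_right _ zero_lt_one
  · rw [val_append, val_replicate, val_cons]
    exact (add_lt_add_iff_left _).2 (omegaPow_mul_lt k x)

lemma H_infl (h : ℕ → ℕ) (hinfl : ∀ x, x ≤ h x) (L : List ℕ) (x : ℕ) :
    x ≤ H h L x := by
  match L with
  | [] => simp
  | 0 :: L => exact le_trans (hinfl x) (by rw [H_zero] at *; exact H_infl h hinfl L (h x))
  | (k+1) :: L =>
    rw [H_succ]
    exact H_infl h hinfl (List.replicate (x+1) k ++ L) x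
termination_by val.{0} L
decreasing_by
  · rw [val_cons, pow_zero]
    exact lt_add_of_pos_right _ zero_lt_one
  · rw [val_append, val_replicate, val_cons]
    exact (add_lt_add_iff_left _).2 (omegaPow_mul_lt k x)

lemma H_mono (h : ℕ → ℕ) (hmono : Monotone h) (hinfl : ∀ x, x ≤ h x) (L : List ℕ)
    {x x' : ℕ} (hx : x ≤ x') : H h L x ≤ H h L x' := by
  match L with
  | [] => simpa
  | 0 :: L =>
    rw [H_zero, H_zero]
    exact H_mono h hmono hinfl L (hmono hx)
  | (k+1) :: L =>
    rw [H_succ, H_succ]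
    have hsplit : List.replicate (x'+1) k = List.replicate (x'-x) k ++ List.replicate (x+1) k := by
      rw [← List.replicate_add]
      congr 1
      omega
    calc H h (List.replicate (x+1) k ++ L) x
        ≤ H h (List.replicate (x+1) k ++ L) (H h (List.replicate (x'-x) k) x') :=
          H_mono h hmono hinfl _ (le_trans hx (H_infl h hinfl _ x'))
      _ = H h (List.replicate (x'+1) k ++ L) x' := by
          simp only [hsplit, List.append_assoc, H_append]
termination_by val.{0} L
decreasing_by
  · rw [val_cons, pow_zero]
    exact lt_add_of_pos_right _ zero_lt_one
  · rw [val_append, val_replicate, val_cons]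
    exact (add_lt_add_iff_left _).2 (omegaPow_mul_lt k x)

lemma H_single_mono (h : ℕ → ℕ) (hmono : Monotone h) (hinfl : ∀ x, x ≤ h x)
    {a b x x' : ℕ} (hab : a ≤ b) (hx : x ≤ x') : H h [a] x ≤ H h [b] x' := by
  induction b with
  | zero =>
    obtain rfl : a = 0 := Nat.le_zero.1 hab
    exact H_mono h hmono hinfl [0] hx
  | succ c ih =>
    rcases Nat.lt_or_ge a (c+1) with hlt | hge
    · have : H h [c+1] x' = H h (List.replicate x' c) (H h [c] x') := by
        rw [H_succ, List.append_nil, List.replicate_succ, show (c :: List.replicate x' c) = [c] ++ List.replicate x' c from rfl, H_append]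
      rw [this]
      exact le_trans (ih (Nat.lt_succ_iff.1 hlt)) (H_infl h hinfl _ _)
    · obtain rfl : a = c+1 := le_antisymm hab hge
      exact H_mono h hmono hinfl [c+1] hx

lemma omegaPow_lt_top (e : ℕ) : (omega0 : Ordinal) ^ e < omega0 ^ omega0 := by
  rw [← opow_natCast]
  exact (opow_lt_opow_iff_right one_lt_omega0).2 (nat_lt_omega0 e)

lemma val_lt_top (L : List ℕ) : val L < omega0 ^ omega0 := by
  induction L with
  | nil => rw [val_nil]; exact opow_pos _ omega0_pos
  | cons e L ih => exact principal_add_omega0_opow _ ih (omegaPow_lt_top e)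

lemma pow_dvd_val {e : ℕ} {L : List ℕ} (hL : ∀ b ∈ L, e ≤ b) : (omega0:Ordinal) ^ e ∣ val L := by
  induction L with
  | nil => simp
  | cons b L ih =>
    rw [val_cons]
    exact dvd_add (ih fun c hc => hL c (List.mem_cons_of_mem _ hc))
      (pow_dvd_pow _ (hL b (List.mem_cons_self)))

lemma isLimit_omegaPow_succ (d : ℕ) : Order.IsSuccLimit ((omega0:Ordinal) ^ (d+1)) := by
  rw [pow_succ]
  exact isSuccLimit_mul_right (pos_iff_ne_zero.2 (pow_ne_zero _ omega0_ne_zero)) isSuccLimit_omega0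

lemma not_pow_succ_dvd {a : ℕ} {β : Ordinal} (ha : omega0 ^ (a+1) ∣ β) :
    ¬ (omega0:Ordinal) ^ (a+2) ∣ (β + omega0 ^ (a+1)) := by
  obtain ⟨c, rfl⟩ := ha
  rintro ⟨d, hd⟩
  have h2 : (omega0:Ordinal)^(a+1) * (c+1) = omega0^(a+1) * (omega0 * d) := by
    rw [mul_add_one, hd, show a+2 = (a+1)+1 from rfl, pow_succ, mul_assoc]
  have hd : c + 1 = omega0 * d :=
    (mul_left_cancel_iff_of_pos (pos_iff_ne_zero.2 (pow_ne_zero _ omega0_ne_zero))).1 h2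
  rcases eq_or_ne d 0 with rfl | hd0
  · rw [mul_zero] at hd
    exact (Ordinal.add_one_eq_succ c ▸ succ_ne_zero c) hd
  · have hlim : Order.IsSuccLimit (omega0 * d) := isSuccLimit_mul_left isSuccLimit_omega0 ?_
    · rw [← hd, Ordinal.add_one_eq_succ] at hlim
      exact Order.not_isSuccLimit_succ _ hlim
    · exact pos_iff_ne_zero.2 hd0

lemma nf_unique {a b : ℕ} {β γ : Ordinal} (ha : omega0 ^ (a+1) ∣ β) (hb : omega0 ^ (b+1) ∣ γ)
    (hEq : β + omega0 ^ (a+1) = γ + omega0 ^ (b+1)) : a = b ∧ β = γ := by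
  have hab : a = b := by
    rcases lt_trichotomy a b with hlt | he | hlt
    · exfalso
      refine not_pow_succ_dvd ha (hEq ▸ dvd_add (dvd_trans (pow_dvd_pow _ (by omega)) hb) ?_)
      exact pow_dvd_pow _ (by omega)
    · exact he
    · exfalso
      refine not_pow_succ_dvd hb (hEq.symm ▸ dvd_add (dvd_trans (pow_dvd_pow _ (by omega)) ha) ?_)
      exact pow_dvd_pow _ (by omega)
  subst hab
  refine ⟨rfl, ?_⟩
  obtain ⟨c, rfl⟩ := ha
  obtain ⟨d, rfl⟩ := hb
  rw [← mul_add_one, ← mul_add_one,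
    mul_left_cancel_iff_of_pos (pos_iff_ne_zero.2 (pow_ne_zero _ omega0_ne_zero))] at hEq
  rw [Ordinal.add_one_eq_succ, Ordinal.add_one_eq_succ] at hEq
  rw [Order.succ_injective hEq]

lemma val_succ_inv {L : List ℕ} {α : Ordinal} (hs : List.Pairwise (· ≤ ·) L)
    (hv : val L = α + 1) : ∃ L', L = 0 :: L' ∧ val L' = α := by
  match L with
  | [] =>
    rw [val_nil] at hv
    exact absurd hv.symm (Ordinal.add_one_eq_succ α ▸ succ_ne_zero α)
  | 0 :: L' =>
    rw [val_cons, pow_zero, Ordinal.add_one_eq_succ, Ordinal.add_one_eq_succ] at hv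
    exact ⟨L', rfl, Order.succ_injective hv⟩
  | (d+1) :: L' =>
    exfalso
    rw [val_cons] at hv
    have hlim : Order.IsSuccLimit (val L' + omega0 ^ (d+1)) := isSuccLimit_add _ (isLimit_omegaPow_succ d)
    rw [hv, Ordinal.add_one_eq_succ] at hlim
    exact Order.not_isSuccLimit_succ _ hlim

lemma val_limit_inv {L : List ℕ} {β : Ordinal} {k : ℕ} (hs : List.Pairwise (· ≤ ·) L)
    (hd : omega0 ^ (k+1) ∣ β) (hv : val L = β + omega0 ^ (k+1)) :
    ∃ L', L = (k+1) :: L' ∧ val L' = β := by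
  match L with
  | [] =>
    exfalso
    rw [val_nil] at hv
    have : (0:Ordinal) < β + omega0 ^ (k+1) :=
      lt_of_lt_of_le (pos_iff_ne_zero.2 (pow_ne_zero _ omega0_ne_zero)) le_add_self
    exact absurd hv.symm this.ne'
  | 0 :: L' =>
    exfalso
    rw [val_cons, pow_zero] at hv
    have hlim : Order.IsSuccLimit (β + omega0 ^ (k+1)) := isSuccLimit_add _ (isLimit_omegaPow_succ k)
    rw [← hv, Ordinal.add_one_eq_succ] at hlim
    exact Order.not_isSuccLimit_succ _ hlim
  | (d+1) :: L' =>
    rw [val_cons] at hv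
    have hd' : (omega0:Ordinal) ^ (d+1) ∣ val L' :=
      pow_dvd_val (fun b hb => (List.pairwise_cons.1 hs).1 b hb)
    obtain ⟨h1, h2⟩ := nf_unique hd' hd hv
    exact ⟨L', by rw [h1], h2⟩

lemma sorted_replicate (m n : ℕ) : List.Pairwise (· ≤ ·) (List.replicate m n) := by
  induction m with
  | zero => simp
  | succ m ih =>
    rw [List.replicate_succ, List.pairwise_cons]
    exact ⟨fun b hb => le_of_eq (List.eq_of_mem_replicate hb).symm, ih⟩

lemma exists_list_aux (n : ℕ) : ∀ α : Ordinal, α < omega0 ^ n →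
    ∃ L, List.Pairwise (· ≤ ·) L ∧ (∀ e ∈ L, e < n) ∧ val L = α := by
  induction n with
  | zero =>
    intro α hα
    rw [pow_zero, Ordinal.lt_one_iff_zero] at hα
    exact ⟨[], by simp, by simp, by simp [hα]⟩
  | succ n ih =>
    intro α hα
    have hne : (omega0:Ordinal) ^ n ≠ 0 := pow_ne_zero _ omega0_ne_zero
    have hq : α / omega0 ^ n < omega0 := by
      rw [Ordinal.div_lt hne, ← pow_succ]
      exact hα
    obtain ⟨m, hm⟩ := Ordinal.lt_omega0.1 hq
    obtain ⟨L, hs, hb, hv⟩ := ih (α % omega0 ^ n) (Ordinal.mod_lt _ hne)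
    refine ⟨L ++ List.replicate m n, ?_, ?_, ?_⟩
    · rw [List.pairwise_append]
      exact ⟨hs, sorted_replicate m n,
        fun a ha b hb' => le_of_lt (by rw [List.eq_of_mem_replicate hb']; exact hb a ha)⟩
    · intro e he
      rcases List.mem_append.1 he with h | h
      · exact Nat.lt_succ_of_lt (hb e h)
      · rw [List.eq_of_mem_replicate h]; exact Nat.lt_succ_self n
    · rw [val_append, val_replicate, hv, ← hm, Ordinal.div_add_mod]

lemma exists_list {α : Ordinal} (hα : α < omega0 ^ omega0) :
    ∃ L, List.Pairwise (· ≤ ·) L ∧ val L = α := by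
  rcases eq_or_ne α 0 with rfl | h0
  · exact ⟨[], by simp, by simp⟩
  · have hlog : log omega0 α < omega0 := (lt_opow_iff_log_lt one_lt_omega0 h0).1 hα
    obtain ⟨m, hm⟩ := Ordinal.lt_omega0.1 hlog
    have : α < omega0 ^ (m+1) := by
      have := lt_opow_succ_log_self one_lt_omega0 α
      rwa [hm, ← natCast_succ, opow_natCast] at this
    obtain ⟨L, hs, _, hv⟩ := exists_list_aux (m+1) α this
    exact ⟨L, hs, hv⟩

lemma eq_nil_of_val_eq_zero {L : List ℕ} (hv : val L = 0) : L = [] := by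
  match L with
  | [] => rfl
  | e :: L' =>
    exfalso
    rw [val_cons] at hv
    have : (0:Ordinal) < val L' + omega0 ^ e :=
      lt_of_lt_of_le (pos_iff_ne_zero.2 (pow_ne_zero _ omega0_ne_zero)) le_add_self
    exact this.ne' hv

lemma hardy_eq {h : ℕ → ℕ} {α : Ordinal} {x y : ℕ} (D : HardyRel h α x y) :
    ∀ L, List.Pairwise (· ≤ ·) L → val L = α → y = H h L x := by
  induction D with
  | zero x =>
    intro L hs hv
    rw [eq_nil_of_val_eq_zero hv, H_nil]
  | succ α x y sub IH =>
    intro L hs hv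
    obtain ⟨L', rfl, hv'⟩ := val_succ_inv hs hv
    rw [H_zero]
    exact IH L' (List.pairwise_cons.1 hs).2 hv'
  | top x y sub IH =>
    intro L hs hv
    exact absurd hv (ne_of_lt (val_lt_top L))
  | limit β k x y hdvd sub IH =>
    intro L hs hv
    obtain ⟨L', rfl, hv'⟩ := val_limit_inv hs hdvd hv
    rw [H_succ]
    refine IH (List.replicate (x+1) k ++ L') ?_ ?_
    · rw [List.pairwise_append]
      refine ⟨sorted_replicate _ _, (List.pairwise_cons.1 hs).2, fun a ha b hb => ?_⟩
      rw [List.eq_of_mem_replicate ha]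
      exact le_trans (Nat.le_succ k) ((List.pairwise_cons.1 hs).1 b hb)
    · rw [val_append, val_replicate, hv']

lemma top_case {h : ℕ → ℕ} {x y : ℕ} (D : HardyRel h (omega0 ^ omega0) x y) :
    y = H h [x+1] x := by
  have key : ∀ α, HardyRel h α x y → α = omega0 ^ omega0 → y = H h [x+1] x := by
    intro α D
    cases D with
    | zero =>
      intro hEq
      exact absurd hEq.symm (opow_pos _ omega0_pos).ne'
    | succ α x y sub =>
      intro hEq
      exfalso
      have hlim : Order.IsSuccLimit (omega0 ^ omega0) := isSuccLimit_opow one_lt_omega0 isSuccLimit_omega0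
      rw [← hEq, Ordinal.add_one_eq_succ] at hlim
      exact Order.not_isSuccLimit_succ _ hlim
    | top x y sub =>
      intro _
      refine hardy_eq sub [x+1] (List.pairwise_singleton _ _) ?_
      rw [val_cons, val_nil, zero_add]
    | limit β k x' y' hdvd sub =>
      intro hEq
      have hβ : β < omega0 ^ omega0 := by
        rw [← hEq]
        exact lt_add_of_pos_right _ (pos_iff_ne_zero.2 (pow_ne_zero _ omega0_ne_zero))
      have h2 : β + omega0 ^ (k+1) < omega0 ^ omega0 :=
        principal_add_omega0_opow omega0 hβ (omegaPow_lt_top (k+1))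
      exact absurd hEq (ne_of_lt h2)
  exact key _ D rfl


/-- For every monotone inflationary `h : ℕ → ℕ` and every ordinal `α ≤ ω^ω`,
the Hardy function `h^α` is inflationary and monotone. -/
theorem stmt6 (h : ℕ → ℕ) (hmono : Monotone h) (hinfl : ∀ x, x ≤ h x)
    (α : Ordinal) (hα : α ≤ omega0 ^ omega0) :
    (∀ x y, HardyRel h α x y → x ≤ y) ∧
    (∀ x x' y y', x ≤ x' → HardyRel h α x y → HardyRel h α x' y' → y ≤ y') := by
  by_cases hEq : α = omega0 ^ omega0
  · subst hEq
    constructor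
    · intro x y D
      rw [top_case D]
      exact H_infl h hinfl _ x
    · intro x x' y y' hxx D D'
      rw [top_case D, top_case D']
      exact H_single_mono h hmono hinfl (by omega) hxx
  · obtain ⟨L, hs, hv⟩ := exists_list (lt_of_le_of_ne hα hEq)
    constructor
    · intro x y D
      rw [hardy_eq D L hs hv]
      exact H_infl h hinfl _ x
    · intro x x' y y' hxx D D'
      rw [hardy_eq D L hs hv, hardy_eq D' L hs hv]
      exact H_mono h hmono hinfl L hxx
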